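/- There exists a constant C > 0 such that for all integers n, m with 0 ≤ m ≤ n-1 and n ≥ 1: 1 ≤ Π_{r=0}^{m-1} (n - m + 2r)/(n - m - 1/2 + r) ≤ exp(C·m(m+1)/n). -/

import Mathlib

/-- There exists `C > 0` such that for all integers `n ≥ 1` and `0 ≤ m ≤ n-1`,
`1 ≤ Π_{r=0}^{m-1} (n-m+2r)/(n-m-1/2+r) ≤ exp(C·m(m+1)/n)`. -/
theorem prod_quotient_bound :
    ∃ C : ℝ, 0 < C ∧ ∀ n m : ℕ, 1 ≤ n → m + 1 ≤ n →
      1 ≤ (∏ r ∈ Finset.range m,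
            ((n : ℝ) - m + 2 * r) / ((n : ℝ) - m - 1 / 2 + r)) ∧
      (∏ r ∈ Finset.range m,
            ((n : ℝ) - m + 2 * r) / ((n : ℝ) - m - 1 / 2 + r)) ≤
        Real.exp (C * (m * (m + 1)) / n) := by
  refine ⟨2, by norm_num, fun n m hn hm => ?_⟩
  have hnm : (m : ℝ) + 1 ≤ n := by exact_mod_cast hm
  have hn0 : (0 : ℝ) < n := by positivity
  have hd : ∀ r : ℕ, (0 : ℝ) < (n : ℝ) - m - 1 / 2 + r := by
    intro r
    have : (0 : ℝ) ≤ r := Nat.cast_nonneg r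
    linarith
  set t : ℕ → ℝ := fun r => ((r : ℝ) + 1 / 2) / ((n : ℝ) - m - 1 / 2 + r) with ht
  have htnn : ∀ r : ℕ, 0 ≤ t r := by
    intro r
    have h1 : (0 : ℝ) ≤ r := Nat.cast_nonneg r
    have := hd r
    positivity
  have hfac : ∀ r : ℕ, ((n : ℝ) - m + 2 * r) / ((n : ℝ) - m - 1 / 2 + r) = 1 + t r := by
    intro r
    have := hd r
    simp only [ht]
    rw [div_eq_iff (hd r).ne', add_mul, one_mul, div_mul_cancel₀ _ (hd r).ne']
    ring
  constructor
  · have h1 := Finset.prod_le_prod (s := Finset.range m) (f := fun _ => (1 : ℝ))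
      (g := fun r : ℕ => ((n : ℝ) - m + 2 * r) / ((n : ℝ) - m - 1 / 2 + r))
      (fun r _ => zero_le_one) (fun r _ => by rw [hfac r]; linarith [htnn r])
    simpa using h1
  · have step1 : (∏ r ∈ Finset.range m,
        ((n : ℝ) - m + 2 * r) / ((n : ℝ) - m - 1 / 2 + r)) ≤
        ∏ r ∈ Finset.range m, Real.exp (t r) := by
      apply Finset.prod_le_prod
      · intro r _
        rw [hfac r]; linarith [htnn r]
      · intro r _
        rw [hfac r]
        have := Real.add_one_le_exp (t r)
        linarith
    have step2 : ∏ r ∈ Finset.range m, Real.exp (t r)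
        = Real.exp (∑ r ∈ Finset.range m, t r) := (Real.exp_sum _ _).symm
    have hsum : (∑ r ∈ Finset.range m, t r) ≤ 2 * (m * (m + 1)) / n := by
      rcases le_or_gt (2 * m) n with h | h
      · rcases Nat.eq_zero_or_pos m with rfl | hm1
        · simp
        have hm1' : (1 : ℝ) ≤ m := by exact_mod_cast hm1
        have h' : 2 * (m : ℝ) ≤ n := by exact_mod_cast h
        have hn2 : (2 : ℝ) ≤ n := by linarith
        have key : ∀ k : ℕ, ∑ r ∈ Finset.range k, (4 * (r : ℝ) + 2) = 2 * (k : ℝ) ^ 2 := by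
          intro k
          induction k with
          | zero => simp
          | succ k ih => rw [Finset.sum_range_succ, ih]; push_cast; ring
        calc (∑ r ∈ Finset.range m, t r)
            ≤ ∑ r ∈ Finset.range m, (4 * (r : ℝ) + 2) / n := by
              apply Finset.sum_le_sum
              intro r _
              have hr0 : (0 : ℝ) ≤ r := Nat.cast_nonneg r
              have hq : (n : ℝ) / 4 ≤ (n : ℝ) - m - 1 / 2 + r := by linarith
              have hq0 : (0 : ℝ) < (n : ℝ) / 4 := by positivity
              have : t r ≤ ((r : ℝ) + 1 / 2) / ((n : ℝ) / 4) :=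
                div_le_div_of_nonneg_left (by linarith) hq0 hq
              calc t r ≤ ((r : ℝ) + 1 / 2) / ((n : ℝ) / 4) := this
                _ = (4 * (r : ℝ) + 2) / n := by
                    rw [div_div_eq_mul_div]; ring_nf
          _ = (∑ r ∈ Finset.range m, (4 * (r : ℝ) + 2)) / n := by
              rw [Finset.sum_div]
          _ = 2 * (m : ℝ) ^ 2 / n := by rw [key]
          _ ≤ 2 * (m * (m + 1)) / n := by
              gcongr
              nlinarith [Nat.cast_nonneg (α := ℝ) m]
      · have h' : (n : ℝ) ≤ 2 * m := by
          have : n ≤ 2 * m := le_of_lt h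
          exact_mod_cast this
        calc (∑ r ∈ Finset.range m, t r)
            ≤ ∑ _r ∈ Finset.range m, (1 : ℝ) := by
              apply Finset.sum_le_sum
              intro r _
              have hr0 : (0 : ℝ) ≤ r := Nat.cast_nonneg r
              rw [ht]
              rw [div_le_one (hd r)]
              linarith
          _ = m := by simp
          _ ≤ 2 * (m * (m + 1)) / n := by
              rw [le_div_iff₀ hn0]
              nlinarith [Nat.cast_nonneg (α := ℝ) m]
    calc _ ≤ _ := step1
      _ = _ := step2
      _ ≤ Real.exp (2 * (m * (m + 1)) / n) := Real.exp_le_exp.2 hsum
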